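/- Key lemma in the proof of the ML soundness theorem: for every Kripke model M = (I, ξ, W, R, ζ, ∇_M), there exists a propositional Kripke model K = (W, R, ζ') over the same states and accessibility relation such that (i) for every FOML expression e and state w, K,w ⊨ ⟦e⟧ iff ⟦e⟧^M_w = tt (where ⟦e⟧ is the ML coalescing of e), and (ii) for every rigid expression e and state w, K,w ⊨ ⟨e⟩ ⟹ ∇⟨e⟩. -/
import Mathlib

open scoped Classical

/-- FOML expressions. -/
inductive Expr (X V O : Type) (ar : O → ℕ) : Type where
  | rig   : X → Expr X V O ar
  | flex  : V → Expr X V O ar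
  | app   : (op : O) → (Fin (ar op) → Expr X V O ar) → Expr X V O ar
  | eq    : Expr X V O ar → Expr X V O ar → Expr X V O ar
  | fls   : Expr X V O ar
  | imp   : Expr X V O ar → Expr X V O ar → Expr X V O ar
  | all   : X → Expr X V O ar → Expr X V O ar
  | nabla : Expr X V O ar → Expr X V O ar

/-- Kripke model for FOML (with the rigid valuation ξ given separately). -/
structure Model (X V O : Type) (ar : O → ℕ) where
  U : Type
  tt : U
  ff : U
  tt_ne_ff : tt ≠ ff
  I : (op : O) → (Fin (ar op) → U) → U
  W : Type
  W_nonempty : Nonempty W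
  R : W → W → Prop
  ζ : V → W → U
  box : Set U → U
  box_eq_tt : ∀ S : Set U, box S = tt ↔ S ⊆ {tt}

variable {X V O : Type} {ar : O → ℕ}

noncomputable def eval (M : Model X V O ar) : Expr X V O ar → (X → M.U) → M.W → M.U
  | .rig x, ξ, _ => ξ x
  | .flex v, _, w => M.ζ v w
  | .app op es, ξ, w => M.I op (fun i => eval M (es i) ξ w)
  | .eq a b, ξ, w => if eval M a ξ w = eval M b ξ w then M.tt else M.ff
  | .fls, _, _ => M.ff
  | .imp a b, ξ, w => if (eval M a ξ w = M.tt → eval M b ξ w = M.tt) then M.tt else M.ff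
  | .all x e, ξ, w => if (∀ d : M.U, eval M e (Function.update ξ x d) w = M.tt) then M.tt else M.ff
  | .nabla e, ξ, w => M.box {u : M.U | ∃ w', M.R w w' ∧ eval M e ξ w' = u}

def sat (M : Model X V O ar) (ξ : X → M.U) (e : Expr X V O ar) (w : M.W) : Prop :=
  eval M e ξ w = M.tt

def Valid (e : Expr X V O ar) : Prop :=
  ∀ (M : Model X V O ar) (ξ : X → M.U) (w : M.W), sat M ξ e w

def Consequence (Γ : Set (Expr X V O ar)) (φ : Expr X V O ar) : Prop :=
  ∀ (M : Model X V O ar) (ξ : X → M.U),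
    (∀ ψ ∈ Γ, ∀ w : M.W, sat M ξ ψ w) → ∀ w : M.W, sat M ξ φ w

def Rigid : Expr X V O ar → Prop
  | .rig _ => True
  | .flex _ => False
  | .app _ es => ∀ i, Rigid (es i)
  | .eq a b => Rigid a ∧ Rigid b
  | .fls => True
  | .imp a b => Rigid a ∧ Rigid b
  | .all _ e => Rigid e
  | .nabla _ => False

def freeRigid (y : X) : Expr X V O ar → Prop
  | .rig x => y = x
  | .flex _ => False
  | .app _ es => ∃ i, freeRigid y (es i)
  | .eq a b => freeRigid y a ∨ freeRigid y b
  | .fls => False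
  | .imp a b => freeRigid y a ∨ freeRigid y b
  | .all x e => y ≠ x ∧ freeRigid y e
  | .nabla e => freeRigid y e

/-! ### de Bruijn representation, used to identify λ-abstractions up to α-equivalence -/

/-- Locally-nameless / de Bruijn version of FOML expressions: bound rigid variables
    are represented by indices, free rigid variables by names.  Two named expressions
    (or λ-abstractions over lists of rigid variables) are α-equivalent iff they have
    the same de Bruijn image. -/
inductive DB (X V O : Type) (ar : O → ℕ) : Type where
  | bvar  : ℕ → DB X V O ar
  | fvar  : X → DB X V O ar
  | flex  : V → DB X V O ar
  | app   : (op : O) → (Fin (ar op) → DB X V O ar) → DB X V O ar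
  | eq    : DB X V O ar → DB X V O ar → DB X V O ar
  | fls   : DB X V O ar
  | imp   : DB X V O ar → DB X V O ar → DB X V O ar
  | all   : DB X V O ar → DB X V O ar
  | nabla : DB X V O ar → DB X V O ar

/-- Conversion to de Bruijn form, relative to a context `ctx` of bound rigid
    variables (innermost binder first). -/
noncomputable def toDB (ctx : List X) : Expr X V O ar → DB X V O ar
  | .rig x =>
      match ctx.findIdx? (fun y => decide (y = x)) with
      | some i => .bvar i
      | none => .fvar x
  | .flex v => .flex v
  | .app op es => .app op (fun i => toDB ctx (es i))
  | .eq a b => .eq (toDB ctx a) (toDB ctx b)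
  | .fls => .fls
  | .imp a b => .imp (toDB ctx a) (toDB ctx b)
  | .all x e => .all (toDB (x :: ctx) e)
  | .nabla e => .nabla (toDB ctx e)


/-! ### Propositional modal logic (ML) -/

/-- ML formulas over propositional (flexible) variables `P`. -/
inductive MLF (P : Type) : Type where
  | var   : P → MLF P
  | fls   : MLF P
  | imp   : MLF P → MLF P → MLF P
  | nabla : MLF P → MLF P

/-- A propositional Kripke model (the valuation is Prop-valued: `True` plays the
    role of tt and `False` of ff). -/
structure MLModel (P : Type) where
  W : Type
  W_nonempty : Nonempty W
  R : W → W → Prop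
  val : P → W → Prop

def mlsat {P : Type} (K : MLModel P) : MLF P → K.W → Prop
  | .var p, w => K.val p w
  | .fls, _ => False
  | .imp a b, w => mlsat K a w → mlsat K b w
  | .nabla a, w => ∀ w' : K.W, K.R w w' → mlsat K a w'

def MLConsequence {P : Type} (Δ : Set (MLF P)) (χ : MLF P) : Prop :=
  ∀ K : MLModel P, (∀ ψ ∈ Δ, ∀ w : K.W, mlsat K ψ w) → ∀ w : K.W, mlsat K χ w

/-! ### Coalescing first-order subexpressions to ML -/

/-- Propositional variables of the coalesced ML language: the original flexible
    variables 𝒱 together with a fresh variable ⟨e⟩ for each first-order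
    expression e; expressions are represented by their (closed-context) de Bruijn
    image, so that ⟨e⟩ and ⟨e'⟩ are identified iff e and e' are α-equivalent. -/
def MLVar (X V O : Type) (ar : O → ℕ) : Type := V ⊕ DB X V O ar

/-- The fresh propositional variable ⟨e⟩. -/
noncomputable def atomOf (e : Expr X V O ar) : MLVar X V O ar := Sum.inr (toDB [] e)

/-- Coalescing an FOML expression to an ML formula. -/
noncomputable def mlcoal : Expr X V O ar → MLF (MLVar X V O ar)
  | .rig x => .var (atomOf (.rig x))
  | .flex v => .var (.inl v)
  | .app op es => .var (atomOf (.app op es))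
  | .eq a b => .var (atomOf (.eq a b))
  | .fls => .fls
  | .imp a b => .imp (mlcoal a) (mlcoal b)
  | .all x e => .var (atomOf (.all x e))
  | .nabla e => .nabla (mlcoal e)

/-- Occurrence of a propositional variable in an ML formula. -/
def occursVar {P : Type} (p : P) : MLF P → Prop
  | .var q => p = q
  | .fls => False
  | .imp a b => occursVar p a ∨ occursVar p b
  | .nabla a => occursVar p a

/-- 𝓗(Δ): the rigidity hypotheses ⟨e⟩ ⟹ ∇⟨e⟩, for all fresh variables ⟨e⟩
    introduced in ⟦Δ⟧ that correspond to rigid expressions e. -/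
def Hset (Δ : Set (Expr X V O ar)) : Set (MLF (MLVar X V O ar)) :=
  { f | ∃ e : Expr X V O ar, Rigid e ∧
        (∃ ψ ∈ Δ, occursVar (atomOf e) (mlcoal ψ)) ∧
        f = .imp (.var (atomOf e)) (.nabla (.var (atomOf e))) }

/-! ### Auxiliary de Bruijn semantics -/

section Aux

variable {X V O : Type} {ar : O → ℕ}

/-- Semantics of de Bruijn expressions, with environment `ρ` for bound variables. -/
noncomputable def evalDB (M : Model X V O ar) (ξ : X → M.U) :
    DB X V O ar → (ℕ → M.U) → M.W → M.U
  | .bvar n, ρ, _ => ρ n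
  | .fvar x, _, _ => ξ x
  | .flex v, _, w => M.ζ v w
  | .app op es, ρ, w => M.I op (fun i => evalDB M ξ (es i) ρ w)
  | .eq a b, ρ, w => if evalDB M ξ a ρ w = evalDB M ξ b ρ w then M.tt else M.ff
  | .fls, _, _ => M.ff
  | .imp a b, ρ, w =>
      if (evalDB M ξ a ρ w = M.tt → evalDB M ξ b ρ w = M.tt) then M.tt else M.ff
  | .all e, ρ, w =>
      if (∀ d : M.U, evalDB M ξ e (fun n => Nat.rec d (fun m _ => ρ m) n) w = M.tt)
      then M.tt else M.ff
  | .nabla e, ρ, w => M.box {u : M.U | ∃ w', M.R w w' ∧ evalDB M ξ e ρ w' = u}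

lemma ite_eq_tt (M : Model X V O ar) (c : Prop) [Decidable c] :
    (if c then M.tt else M.ff) = M.tt ↔ c := by
  by_cases h : c <;> simp [h, M.tt_ne_ff, (Ne.symm M.tt_ne_ff : M.ff ≠ M.tt)]

/-- Key correspondence lemma between the named and de Bruijn semantics. -/
lemma eval_toDB (M : Model X V O ar) (ξ : X → M.U) :
    ∀ (e : Expr X V O ar) (ctx : List X) (ξ' : X → M.U) (ρ : ℕ → M.U) (w : M.W),
    (∀ (x : X) (i : ℕ), ctx.findIdx? (fun y => decide (y = x)) = some i → ρ i = ξ' x) →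
    (∀ x : X, ctx.findIdx? (fun y => decide (y = x)) = none → ξ x = ξ' x) →
    evalDB M ξ (toDB ctx e) ρ w = eval M e ξ' w
  | .rig x, ctx, ξ', ρ, w, H, H2 => by
      simp only [toDB, eval]
      cases h : ctx.findIdx? (fun y => decide (y = x)) with
      | none => simpa [evalDB] using H2 x h
      | some i => simpa [evalDB] using H x i h
  | .flex v, ctx, ξ', ρ, w, H, H2 => rfl
  | .app op es, ctx, ξ', ρ, w, H, H2 => by
      simp only [toDB, eval, evalDB]
      congr 1
      funext i
      exact eval_toDB M ξ (es i) ctx ξ' ρ w H H2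
  | .eq a b, ctx, ξ', ρ, w, H, H2 => by
      simp only [toDB, eval, evalDB,
        eval_toDB M ξ a ctx ξ' ρ w H H2, eval_toDB M ξ b ctx ξ' ρ w H H2]
  | .fls, ctx, ξ', ρ, w, H, H2 => rfl
  | .imp a b, ctx, ξ', ρ, w, H, H2 => by
      simp only [toDB, eval, evalDB,
        eval_toDB M ξ a ctx ξ' ρ w H H2, eval_toDB M ξ b ctx ξ' ρ w H H2]
  | .all x e, ctx, ξ', ρ, w, H, H2 => by
      simp only [toDB, eval, evalDB]
      congr 1
      refine propext (forall_congr' fun d => ?_)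
      rw [eval_toDB M ξ e (x :: ctx) (Function.update ξ' x d)
          (fun n => Nat.rec d (fun m _ => ρ m) n) w ?_ ?_]
      · intro y i h
        rw [List.findIdx?_cons] at h
        by_cases hxy : x = y
        · subst hxy
          simp at h
          subst h
          simp [Function.update]
        · simp [hxy] at h
          obtain ⟨j, hj, rfl⟩ := h
          have := H y j hj
          simpa [Function.update, Ne.symm hxy] using this
      · intro y h
        rw [List.findIdx?_cons] at h
        by_cases hxy : x = y
        · simp [hxy] at h
        · simp [hxy] at h
          rw [H2 y (List.findIdx?_eq_none_iff.mpr (by simpa using h))]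
          simp [Function.update, Ne.symm hxy]
  | .nabla e, ctx, ξ', ρ, w, H, H2 => by
      simp only [toDB, eval, evalDB]
      congr 1
      ext u
      exact exists_congr fun w' => and_congr_right fun _ => by
        rw [eval_toDB M ξ e ctx ξ' ρ w' H H2]

/-- Rigid expressions have state-independent values. -/
lemma eval_rigid (M : Model X V O ar) :
    ∀ (e : Expr X V O ar), Rigid e → ∀ (ξ : X → M.U) (w w' : M.W),
      eval M e ξ w = eval M e ξ w'
  | .rig x, _, ξ, w, w' => rfl
  | .flex v, h, _, _, _ => h.elim
  | .app op es, h, ξ, w, w' => by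
      simp only [eval]
      congr 1
      funext i
      exact eval_rigid M (es i) (h i) ξ w w'
  | .eq a b, h, ξ, w, w' => by
      simp only [eval, eval_rigid M a h.1 ξ w w', eval_rigid M b h.2 ξ w w']
  | .fls, _, _, _, _ => rfl
  | .imp a b, h, ξ, w, w' => by
      simp only [eval, eval_rigid M a h.1 ξ w w', eval_rigid M b h.2 ξ w w']
  | .all x e, h, ξ, w, w' => by
      simp only [eval]
      congr 1
      refine propext (forall_congr' fun d => ?_)
      rw [eval_rigid M e h (Function.update ξ x d) w w']
  | .nabla e, h, _, _, _ => h.elim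

end Aux

/-- key lemma in the proof of the ML soundness theorem: for every
    Kripke model M (with rigid valuation ξ) there is a propositional Kripke model
    over the same states and accessibility relation such that (i) for every FOML
    expression e and state w, the coalesced formula ⟦e⟧ holds at w iff
    ⟦e⟧^M_w = tt, and (ii) ⟨e⟩ ⟹ ∇⟨e⟩ holds everywhere for every rigid e. -/
theorem coalescing_ML_key_lemma (X V O : Type) (ar : O → ℕ)
    (M : Model X V O ar) (ξ : X → M.U) :
    ∃ val : MLVar X V O ar → M.W → Prop,
      (∀ (e : Expr X V O ar) (w : M.W),
        mlsat (MLModel.mk M.W M.W_nonempty M.R val) (mlcoal e) w ↔ eval M e ξ w = M.tt) ∧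
      (∀ e : Expr X V O ar, Rigid e → ∀ w : M.W,
        mlsat (MLModel.mk M.W M.W_nonempty M.R val)
          (MLF.imp (.var (atomOf e)) (.nabla (.var (atomOf e)))) w) := by
  classical
  set ρ0 : ℕ → M.U := fun _ => M.tt with hρ0
  refine ⟨fun p w => match p with
    | Sum.inl v => M.ζ v w = M.tt
    | Sum.inr d => evalDB M ξ d ρ0 w = M.tt, ?_, ?_⟩
  · have hctx : ∀ (x : X) (i : ℕ),
        ([] : List X).findIdx? (fun y => decide (y = x)) = some i → ρ0 i = ξ x := by
      intro x i h; simp at h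
    have hatom : ∀ (e : Expr X V O ar) (w : M.W),
        evalDB M ξ (toDB [] e) ρ0 w = eval M e ξ w :=
      fun e w => eval_toDB M ξ e [] ξ ρ0 w hctx (fun _ _ => rfl)
    intro e
    induction e with
    | rig x => intro w; simp only [mlcoal, mlsat, atomOf]; rw [hatom]
    | flex v => intro w; exact Iff.rfl
    | app op es ih => intro w; simp only [mlcoal, mlsat, atomOf]; rw [hatom]
    | eq a b iha ihb => intro w; simp only [mlcoal, mlsat, atomOf]; rw [hatom]
    | fls => intro w; simp [mlcoal, mlsat, eval, M.tt_ne_ff, Ne.symm M.tt_ne_ff]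
    | imp a b iha ihb =>
        intro w
        simp only [mlcoal, mlsat, iha, ihb, eval, ite_eq_tt]
    | all x e ih => intro w; simp only [mlcoal, mlsat, atomOf]; rw [hatom]
    | nabla e ih =>
        intro w
        simp only [mlcoal, mlsat, eval, M.box_eq_tt]
        constructor
        · intro h u hu
          obtain ⟨w', hw', rfl⟩ := hu
          exact (ih w').mp (h w' hw')
        · intro h w' hw'
          exact (ih w').mpr (h ⟨w', hw', rfl⟩)
  · intro e he w hw w' hww'
    have hctx : ∀ (x : X) (i : ℕ),
        ([] : List X).findIdx? (fun y => decide (y = x)) = some i → ρ0 i = ξ x := by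
      intro x i h; simp at h
    simp only [mlsat, atomOf] at hw ⊢
    rw [eval_toDB M ξ e [] ξ ρ0 w hctx (fun _ _ => rfl)] at hw
    rw [eval_toDB M ξ e [] ξ ρ0 w' hctx (fun _ _ => rfl), eval_rigid M e he ξ w' w]
    exact hw
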